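/- Let F : 𝒞 ⇄ 𝒟 : G be adjoint exact functors between triangulated categories with weight structures w on 𝒞 and v on 𝒟. Then F is left weight-exact (F(𝒞_{w≤0}) ⊂ 𝒟_{v≤0}) if and only if G is right weight-exact (G(𝒟_{v≥0}) ⊂ 𝒞_{w≥0}). -/

import Mathlib

open CategoryTheory CategoryTheory.Limits CategoryTheory.Pretriangulated ZeroObject

universe v u v₂ u₂

/-- A weight structure (homological convention) on a triangulated category: a pair of
additive retract-closed classes `(le, ge)` (playing the roles of `C_{w≤0}` and `C_{w≥0}`)
satisfying shift-stability `C_{w≤0} ⊆ C_{w≤0}[1]`, `C_{w≥0}[1] ⊆ C_{w≥0}`, the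
orthogonality `Hom(C_{w≤0}, C_{w≥0}[1]) = 0`, and the existence of weight decompositions
`B → M → A → B[1]` with `B ∈ C_{w≤0}` and `A ∈ C_{w≥0}[1]`. -/
structure WeightStructure (C : Type u) [Category.{v} C] [Preadditive C] [HasZeroObject C]
    [HasBinaryBiproducts C] [HasShift C ℤ] [∀ n : ℤ, (shiftFunctor C n).Additive]
    [Pretriangulated C] where
  le : Set C
  ge : Set C
  le_zero : (0 : C) ∈ le
  ge_zero : (0 : C) ∈ ge
  le_retract : ∀ X Y : C, (∃ (i : X ⟶ Y) (r : Y ⟶ X), i ≫ r = 𝟙 X) → Y ∈ le → X ∈ le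
  ge_retract : ∀ X Y : C, (∃ (i : X ⟶ Y) (r : Y ⟶ X), i ≫ r = 𝟙 X) → Y ∈ ge → X ∈ ge
  le_add : ∀ X Y : C, X ∈ le → Y ∈ le → (X ⊞ Y) ∈ le
  ge_add : ∀ X Y : C, X ∈ ge → Y ∈ ge → (X ⊞ Y) ∈ ge
  le_shift : ∀ X : C, X ∈ le → X⟦(-1 : ℤ)⟧ ∈ le
  ge_shift : ∀ X : C, X ∈ ge → X⟦(1 : ℤ)⟧ ∈ ge
  orth : ∀ X ∈ le, ∀ Y ∈ ge, ∀ f : X ⟶ Y⟦(1 : ℤ)⟧, f = 0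
  decomp : ∀ M : C, ∃ (B A : C) (f : B ⟶ M) (g : M ⟶ A) (h : A ⟶ B⟦(1 : ℤ)⟧),
    B ∈ le ∧ A⟦(-1 : ℤ)⟧ ∈ ge ∧ Triangle.mk f g h ∈ distTriang C

variable {C : Type u} [Category.{v} C] [Preadditive C] [HasZeroObject C]
  [HasBinaryBiproducts C] [HasShift C ℤ] [∀ n : ℤ, (shiftFunctor C n).Additive]
  [Pretriangulated C]

/-- If `X` is left-orthogonal to `ge⟦1⟧`, then `X ∈ le`. -/
lemma mem_le_of_orth (w : WeightStructure C) (X : C)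
    (h : ∀ Y ∈ w.ge, ∀ f : X ⟶ Y⟦(1 : ℤ)⟧, f = 0) : X ∈ w.le := by
  obtain ⟨B, A, f, g, h', hB, hA, hT⟩ := w.decomp X
  have e : (A⟦(-1 : ℤ)⟧)⟦(1 : ℤ)⟧ ≅ A :=
    (shiftFunctorCompIsoId C (-1 : ℤ) (1 : ℤ) (by norm_num)).app A
  have hg : g = 0 := by
    have := h (A⟦(-1 : ℤ)⟧) hA (g ≫ e.inv)
    calc g = (g ≫ e.inv) ≫ e.hom := by simp
    _ = 0 := by rw [this]; simp
  obtain ⟨s, hs⟩ := Triangle.coyoneda_exact₂ _ hT (𝟙 X) (by simp [hg]; exact Limits.comp_zero)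
  exact w.le_retract X B ⟨s, f, hs.symm⟩ hB

/-- If `Y⟦1⟧` is right-orthogonal to `le`, then `Y ∈ ge`. -/
lemma mem_ge_of_orth (w : WeightStructure C) (Y : C)
    (h : ∀ X ∈ w.le, ∀ f : X ⟶ Y⟦(1 : ℤ)⟧, f = 0) : Y ∈ w.ge := by
  obtain ⟨B, A, f, g, h', hB, hA, hT⟩ := w.decomp (Y⟦(1 : ℤ)⟧)
  have hf : f = 0 := h B hB f
  obtain ⟨r, hr⟩ := Triangle.yoneda_exact₂ _ hT (𝟙 (Y⟦(1 : ℤ)⟧)) (by simp [hf]; exact Limits.zero_comp)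
  have e : Y ≅ (Y⟦(1 : ℤ)⟧)⟦(-1 : ℤ)⟧ :=
    ((shiftFunctorCompIsoId C (1 : ℤ) (-1 : ℤ) (by norm_num)).app Y).symm
  refine w.ge_retract Y (A⟦(-1 : ℤ)⟧)
    ⟨e.hom ≫ g⟦(-1 : ℤ)⟧', r⟦(-1 : ℤ)⟧' ≫ e.inv, ?_⟩ hA
  · have hgr : g ≫ r = 𝟙 _ := hr.symm
    have : g⟦(-1 : ℤ)⟧' ≫ r⟦(-1 : ℤ)⟧' = 𝟙 _ := by
      exact ((shiftFunctor C (-1)).map_comp g r).symm.trans ((congrArg (shiftFunctor C (-1)).map hgr).trans ((shiftFunctor C (-1)).map_id _))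
    rw [Category.assoc, ← Category.assoc (g⟦(-1:ℤ)⟧'), this, Category.id_comp, e.hom_inv_id]

/-- For adjoint exact functors `F ⊣ G` between triangulated categories with weight
structures, `F` is left weight-exact iff `G` is right weight-exact. -/
theorem stmt13 {D : Type u₂} [Category.{v₂} D] [Preadditive D] [HasZeroObject D]
    [HasBinaryBiproducts D] [HasShift D ℤ] [∀ n : ℤ, (shiftFunctor D n).Additive]
    [Pretriangulated D]
    (wC : WeightStructure C) (wD : WeightStructure D)
    (F : C ⥤ D) (G : D ⥤ C) [F.CommShift ℤ] [F.IsTriangulated]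
    [G.CommShift ℤ] [G.IsTriangulated] (adj : F ⊣ G) :
    (∀ X ∈ wC.le, F.obj X ∈ wD.le) ↔ (∀ Y ∈ wD.ge, G.obj Y ∈ wC.ge) := by
  constructor
  · intro hF Y hY
    refine mem_ge_of_orth wC (G.obj Y) (fun X hX f => ?_)
    have e : G.obj (Y⟦(1 : ℤ)⟧) ≅ (G.obj Y)⟦(1 : ℤ)⟧ := (G.commShiftIso (1 : ℤ)).app Y
    have hφ : (adj.homEquiv X (Y⟦(1 : ℤ)⟧)).symm (f ≫ e.inv) = 0 :=
      wD.orth (F.obj X) (hF X hX) Y hY _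
    have : f ≫ e.inv = 0 := by
      have := congrArg (adj.homEquiv X (Y⟦(1 : ℤ)⟧)) hφ
      simpa [Adjunction.homEquiv_unit] using this
    calc f = (f ≫ e.inv) ≫ e.hom := by simp
    _ = 0 := by rw [this]; simp
  · intro hG X hX
    refine mem_le_of_orth wD (F.obj X) (fun Y hY f => ?_)
    have e : G.obj (Y⟦(1 : ℤ)⟧) ≅ (G.obj Y)⟦(1 : ℤ)⟧ := (G.commShiftIso (1 : ℤ)).app Y
    have hφ : adj.homEquiv X (Y⟦(1 : ℤ)⟧) f ≫ e.hom = 0 :=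
      wC.orth X hX (G.obj Y) (hG Y hY) _
    have h0 : adj.homEquiv X (Y⟦(1 : ℤ)⟧) f = 0 := by
      calc adj.homEquiv X (Y⟦(1 : ℤ)⟧) f
          = (adj.homEquiv X (Y⟦(1 : ℤ)⟧) f ≫ e.hom) ≫ e.inv := by simp
      _ = 0 := by rw [hφ]; simp
    have := congrArg (adj.homEquiv X (Y⟦(1 : ℤ)⟧)).symm h0
    simpa [Adjunction.homEquiv_counit] using this
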